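/- arXiv:2208.05239 — 5 statements merged into one kernel-verified Lean document; each statement's English description precedes it below -/
import Mathlib

section
/- If a (Φ,α)-weak Poincaré inequality holds for T, i.e. ‖f‖² ≤ α(r)𝓔(T,f) + rΦ(f) for all r>0 and all f in L²₀(μ), where α : (0,∞) → [0,∞) is decreasing with α(r)=0 for r ≥ 𝔞, then a (Φ,β)-WPI holds with β = α⁻ the generalized inverse, i.e. ‖f‖² ≤ s𝓔(T,f) + α⁻(s)Φ(f) for all s>0, and α⁻(s) ≤ 𝔞 for all s>0 and α⁻(s) → 0 as s → ∞. -/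
/-- If a `(Φ,α)`-weak Poincaré inequality holds for `T` (with Dirichlet form `E`),
i.e. `‖f‖² ≤ α(r)·E(f) + r·Φ(f)` for all `r > 0` and `f ∈ L²₀(μ)`, where `α` is
decreasing on `(0,∞)` and vanishes on `[𝔞,∞)`, then a `(Φ,β)`-WPI holds with
`β = α⁻` the generalized inverse `α⁻(s) = inf {r > 0 : α(r) ≤ s}`; moreover
`α⁻(s) ≤ 𝔞` for all `s > 0` and `α⁻(s) → 0` as `s → ∞`. -/
theorem wpi_alpha_to_beta
    {H : Type*} [NormedAddCommGroup H] [InnerProductSpace ℝ H]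
    (L0 : Set H) (E Φ : H → ℝ) (𝔞 : ℝ) (h𝔞pos : 0 < 𝔞)
    (hE : ∀ f ∈ L0, 0 ≤ E f) (hΦ : ∀ f ∈ L0, 0 ≤ Φ f)
    (hsieve : ∀ f ∈ L0, ‖f‖ ^ 2 ≤ 𝔞 * Φ f)
    (α : ℝ → ℝ) (hαnonneg : ∀ r > 0, 0 ≤ α r)
    (hαanti : AntitoneOn α (Set.Ioi 0))
    (hα0 : ∀ r, 𝔞 ≤ r → α r = 0)
    (hWPI : ∀ r > 0, ∀ f ∈ L0, ‖f‖ ^ 2 ≤ α r * E f + r * Φ f) :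
    (∀ s > 0, ∀ f ∈ L0,
        ‖f‖ ^ 2 ≤ s * E f + sInf {r : ℝ | 0 < r ∧ α r ≤ s} * Φ f) ∧
    (∀ s > 0, sInf {r : ℝ | 0 < r ∧ α r ≤ s} ≤ 𝔞) ∧
    Filter.Tendsto (fun s => sInf {r : ℝ | 0 < r ∧ α r ≤ s})
      Filter.atTop (nhds 0) := by
  have hmem : ∀ s : ℝ, 0 ≤ s → 𝔞 ∈ {r : ℝ | 0 < r ∧ α r ≤ s} := by
    intro s hs
    exact ⟨h𝔞pos, by rw [hα0 𝔞 le_rfl]; exact hs⟩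
  have hbdd : ∀ s : ℝ, BddBelow {r : ℝ | 0 < r ∧ α r ≤ s} :=
    fun s => ⟨0, fun r hr => hr.1.le⟩
  have hle : ∀ s : ℝ, 0 ≤ s → sInf {r : ℝ | 0 < r ∧ α r ≤ s} ≤ 𝔞 :=
    fun s hs => csInf_le (hbdd s) (hmem s hs)
  have hnn : ∀ s : ℝ, 0 ≤ sInf {r : ℝ | 0 < r ∧ α r ≤ s} :=
    fun s => Real.sInf_nonneg (fun r hr => hr.1.le)
  refine ⟨?_, fun s hs => hle s hs.le, ?_⟩
  · intro s hs f hf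
    set β := sInf {r : ℝ | 0 < r ∧ α r ≤ s} with hβ
    rcases eq_or_lt_of_le (hΦ f hf) with hΦ0 | hΦpos
    · have h1 := hsieve f hf
      rw [← hΦ0] at h1 ⊢
      simp only [mul_zero, add_zero] at *
      exact h1.trans (mul_nonneg hs.le (hE f hf))
    · have key : (‖f‖ ^ 2 - s * E f) / Φ f ≤ β := by
        apply le_csInf ⟨𝔞, hmem s hs.le⟩
        intro r hr
        rw [div_le_iff₀ hΦpos]
        have := hWPI r hr.1 f hf
        have h2 : α r * E f ≤ s * E f := mul_le_mul_of_nonneg_right hr.2 (hE f hf)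
        linarith
      rw [div_le_iff₀ hΦpos] at key
      linarith
  · rw [Metric.tendsto_atTop]
    intro ε hε
    refine ⟨α (min (ε/2) 𝔞), fun s hs => ?_⟩
    have hm : 0 < min (ε/2) 𝔞 := lt_min (by linarith) h𝔞pos
    have hmemε : min (ε/2) 𝔞 ∈ {r : ℝ | 0 < r ∧ α r ≤ s} := ⟨hm, hs⟩
    have h1 : sInf {r : ℝ | 0 < r ∧ α r ≤ s} ≤ min (ε/2) 𝔞 := csInf_le (hbdd s) hmemε
    have h2 := hnn s
    rw [Real.dist_eq, abs_sub_lt_iff]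
    constructor
    · have := min_le_left (ε/2) 𝔞
      linarith
    · linarith
end

section
/- Suppose P(x,{x}) ≥ ε for μ-almost all x. Then 𝓔(P*P, f) ≥ 2ε 𝓔(P, f) for all f ∈ L²(μ). -/
open MeasureTheory ProbabilityTheory

/-- The Dirichlet form `𝓔(T,f) = (1/2)∫∫ (f(x)−f(y))² T(x,dy) μ(dx)`. -/
noncomputable def dirichletForm {E : Type*} [MeasurableSpace E] (μ : Measure E)
    (P : Kernel E E) (f : E → ℝ) : ℝ :=
  (1 / 2) * ∫ x, ∫ y, (f x - f y) ^ 2 ∂(P x) ∂μ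

/-- Conversion of the Dirichlet form to a double `lintegral`. -/
lemma dirichletForm_eq_toReal {E : Type*} [MeasurableSpace E] (μ : Measure E)
    (T : Kernel E E) [IsSFiniteKernel T] (f : E → ℝ) (hf : Measurable f)
    (hfin : ∫⁻ x, ∫⁻ y, ENNReal.ofReal ((f x - f y) ^ 2) ∂(T x) ∂μ ≠ ⊤) :
    dirichletForm μ T f
      = (1 / 2) * (∫⁻ x, ∫⁻ y, ENNReal.ofReal ((f x - f y) ^ 2) ∂(T x) ∂μ).toReal := by
  have hD : Measurable fun p : E × E => ENNReal.ofReal ((f p.1 - f p.2) ^ 2) :=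
    (((hf.comp measurable_fst).sub (hf.comp measurable_snd)).pow_const 2).ennreal_ofReal
  have hH : Measurable fun x => ∫⁻ y, ENNReal.ofReal ((f x - f y) ^ 2) ∂(T x) :=
    Measurable.lintegral_kernel_prod_right (f := fun x y => ENNReal.ofReal ((f x - f y) ^ 2)) hD
  have hae : ∀ᵐ x ∂μ, (∫⁻ y, ENNReal.ofReal ((f x - f y) ^ 2) ∂(T x)) < ⊤ :=
    ae_lt_top hH hfin
  have hinner : ∀ x, ∫ y, (f x - f y) ^ 2 ∂(T x)
      = (∫⁻ y, ENNReal.ofReal ((f x - f y) ^ 2) ∂(T x)).toReal := by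
    intro x
    rw [integral_eq_lintegral_of_nonneg_ae (Filter.Eventually.of_forall fun y => sq_nonneg _)
      ((show Measurable fun y => (f x - f y) ^ 2 from (measurable_const.sub hf).pow_const 2).aestronglyMeasurable)]
  unfold dirichletForm
  rw [show (fun x => ∫ y, (f x - f y) ^ 2 ∂(T x))
      = fun x => (∫⁻ y, ENNReal.ofReal ((f x - f y) ^ 2) ∂(T x)).toReal from funext hinner,
    integral_toReal hH.aemeasurable hae]

/-- Suppose the `μ`-invariant Markov kernel `P` (with `μ`-adjoint kernel `P*`)
satisfies `P(x,{x}) ≥ ε` for `μ`-almost all `x`. Then `𝓔(P*P, f) ≥ 2ε·𝓔(P, f)`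
for all `f ∈ L²(μ)`; here the kernel of the operator `P*P` is `P ∘ₖ P*`. -/
theorem dirichlet_comp_ge_of_holding
    {E : Type*} [MeasurableSpace E] [MeasurableSingletonClass E]
    (μ : Measure E) [IsProbabilityMeasure μ]
    (P Pstar : Kernel E E) [IsMarkovKernel P] [IsMarkovKernel Pstar]
    (hinv : μ.bind P = μ)
    (hadj : ∀ A B : Set E, MeasurableSet A → MeasurableSet B →
      (μ ⊗ₘ Pstar) (A ×ˢ B) = (μ ⊗ₘ P) (B ×ˢ A))
    (ε : ℝ) (hε : 0 ≤ ε)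
    (hhold : ∀ᵐ x ∂μ, ENNReal.ofReal ε ≤ P x {x})
    (f : E → ℝ) (hf : Measurable f) (hf2 : MemLp f 2 μ) :
    2 * ε * dirichletForm μ P f ≤ dirichletForm μ (P ∘ₖ Pstar) f := by
  classical
  set D : E × E → ENNReal := fun p => ENNReal.ofReal ((f p.1 - f p.2) ^ 2) with hDdef
  have hD : Measurable D :=
    (((hf.comp measurable_fst).sub (hf.comp measurable_snd)).pow_const 2).ennreal_ofReal
  set g : E → ENNReal := fun x => ENNReal.ofReal ((f x) ^ 2) with hgdef
  have hg : Measurable g := (hf.pow_const 2).ennreal_ofReal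
  have hgfin : ∫⁻ x, g x ∂μ < ⊤ := hf2.integrable_sq.lintegral_lt_top
  -- pointwise bound on D
  have hDle : ∀ p : E × E, D p ≤ 2 * g p.1 + 2 * g p.2 := by
    intro p
    have h1 : (f p.1 - f p.2) ^ 2 ≤ 2 * (f p.1) ^ 2 + 2 * (f p.2) ^ 2 := by
      nlinarith [sq_nonneg (f p.1 + f p.2)]
    calc D p ≤ ENNReal.ofReal (2 * (f p.1) ^ 2 + 2 * (f p.2) ^ 2) := ENNReal.ofReal_le_ofReal h1
      _ = ENNReal.ofReal (2 * (f p.1) ^ 2) + ENNReal.ofReal (2 * (f p.2) ^ 2) :=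
          ENNReal.ofReal_add (by positivity) (by positivity)
      _ = 2 * g p.1 + 2 * g p.2 := by
          rw [ENNReal.ofReal_mul (by norm_num : (0:ℝ) ≤ 2),
            ENNReal.ofReal_mul (by norm_num : (0:ℝ) ≤ 2)]
          norm_num [hgdef]
  -- measurability helpers
  have hPg : Measurable fun x => ∫⁻ y, g y ∂(P x) :=
    Measurable.lintegral_kernel_prod_right (f := fun _ y => g y) (hg.comp measurable_snd)
  have hSmeas : Measurable fun x => ∫⁻ y, D (x, y) ∂(P x) :=
    Measurable.lintegral_kernel_prod_right (f := fun x y => D (x, y)) hD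
  -- invariance at lintegral level
  have hinvP : ∫⁻ x, ∫⁻ y, g y ∂(P x) ∂μ = ∫⁻ x, g x ∂μ := by
    rw [← Measure.lintegral_bind P.measurable.aemeasurable hg.aemeasurable, hinv]
  -- finiteness of the `P` Dirichlet lintegral
  set LP := ∫⁻ x, ∫⁻ y, D (x, y) ∂(P x) ∂μ with hLPdef
  have hLPfin : LP < ⊤ := by
    have h1 : LP ≤ ∫⁻ x, (2 * g x + 2 * ∫⁻ y, g y ∂(P x)) ∂μ := by
      refine lintegral_mono fun x => ?_
      calc ∫⁻ y, D (x, y) ∂(P x) ≤ ∫⁻ y, (2 * g x + 2 * g y) ∂(P x) :=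
            lintegral_mono fun y => hDle (x, y)
        _ = 2 * g x + 2 * ∫⁻ y, g y ∂(P x) := by
            rw [lintegral_add_left measurable_const, lintegral_const, measure_univ, mul_one,
              lintegral_const_mul 2 hg]
    have h2 : ∫⁻ x, (2 * g x + 2 * ∫⁻ y, g y ∂(P x)) ∂μ
        = 2 * ∫⁻ x, g x ∂μ + 2 * ∫⁻ x, ∫⁻ y, g y ∂(P x) ∂μ := by
      rw [lintegral_add_left (hg.const_mul 2), lintegral_const_mul 2 hg,
        lintegral_const_mul 2 hPg]
    refine lt_of_le_of_lt h1 ?_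
    rw [h2, hinvP]
    exact ENNReal.add_lt_top.2 ⟨ENNReal.mul_lt_top (by norm_num) hgfin,
      ENNReal.mul_lt_top (by norm_num) hgfin⟩
  -- the composed kernel double lintegral as a triple lintegral
  have hcompEq : ∀ x, ∫⁻ w, D (x, w) ∂((P ∘ₖ Pstar) x)
      = ∫⁻ y, ∫⁻ z, D (x, z) ∂(P y) ∂(Pstar x) := by
    intro x
    rw [Kernel.comp_apply]
    exact Measure.lintegral_bind P.measurable.aemeasurable
      ((hD.comp measurable_prodMk_left : Measurable fun w => D (x, w))).aemeasurable
  -- measurability of the swapped integrand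
  set G : E × E → ENNReal := fun p => ∫⁻ z, D (p.1, z) ∂(P p.2) with hGdef
  have hG : Measurable G := by
    have h1 : Measurable (Function.uncurry fun (p : E × E) z => D (p.1, z)) :=
      hD.comp ((measurable_fst.comp measurable_fst).prodMk measurable_snd)
    have h2 := Measurable.lintegral_kernel_prod_right
      (κ := P.comap Prod.snd measurable_snd) h1
    simpa [Kernel.comap_apply] using h2
  -- the adjoint relation as an equality of measures
  have hswapMeas : μ ⊗ₘ Pstar = (μ ⊗ₘ P).map Prod.swap := by
    refine MeasureTheory.ext_of_generate_finite _ generateFrom_prod.symm isPiSystem_prod ?_ ?_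
    · rintro s ⟨A, hA, B, hB, rfl⟩
      rw [Measure.map_apply measurable_swap ((hA : MeasurableSet A).prod hB),
        Set.preimage_swap_prod]
      exact hadj A B hA hB
    · rw [Measure.map_apply measurable_swap MeasurableSet.univ, Set.preimage_univ,
        measure_univ, measure_univ]
  have hswap : ∫⁻ x, ∫⁻ y, G (x, y) ∂(Pstar x) ∂μ = ∫⁻ y, ∫⁻ x, G (x, y) ∂(P y) ∂μ := by
    calc ∫⁻ x, ∫⁻ y, G (x, y) ∂(Pstar x) ∂μ = ∫⁻ p, G p ∂(μ ⊗ₘ Pstar) :=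
          (Measure.lintegral_compProd hG).symm
      _ = ∫⁻ p, G p ∂((μ ⊗ₘ P).map Prod.swap) := by rw [hswapMeas]
      _ = ∫⁻ q, G q.swap ∂(μ ⊗ₘ P) := lintegral_map hG measurable_swap
      _ = ∫⁻ y, ∫⁻ x, G (x, y) ∂(P y) ∂μ :=
          Measure.lintegral_compProd (hG.comp measurable_swap)
  have hLCeq : ∫⁻ x, ∫⁻ w, D (x, w) ∂((P ∘ₖ Pstar) x) ∂μ
      = ∫⁻ y, ∫⁻ x, ∫⁻ z, D (x, z) ∂(P y) ∂(P y) ∂μ := by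
    calc ∫⁻ x, ∫⁻ w, D (x, w) ∂((P ∘ₖ Pstar) x) ∂μ
        = ∫⁻ x, ∫⁻ y, G (x, y) ∂(Pstar x) ∂μ := by
          refine lintegral_congr fun x => ?_
          rw [hcompEq x]
      _ = ∫⁻ y, ∫⁻ x, G (x, y) ∂(P y) ∂μ := hswap
      _ = ∫⁻ y, ∫⁻ x, ∫⁻ z, D (x, z) ∂(P y) ∂(P y) ∂μ := rfl
  -- finiteness of the composed Dirichlet lintegral
  have hLCfin : ∫⁻ x, ∫⁻ w, D (x, w) ∂((P ∘ₖ Pstar) x) ∂μ < ⊤ := by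
    rw [hLCeq]
    have h1 : ∫⁻ y, ∫⁻ x, ∫⁻ z, D (x, z) ∂(P y) ∂(P y) ∂μ
        ≤ ∫⁻ y, (4 * ∫⁻ z, g z ∂(P y)) ∂μ := by
      refine lintegral_mono fun y => ?_
      calc ∫⁻ x, ∫⁻ z, D (x, z) ∂(P y) ∂(P y)
          ≤ ∫⁻ x, (2 * g x + 2 * ∫⁻ z, g z ∂(P y)) ∂(P y) := by
            refine lintegral_mono fun x => ?_
            calc ∫⁻ z, D (x, z) ∂(P y) ≤ ∫⁻ z, (2 * g x + 2 * g z) ∂(P y) :=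
                  lintegral_mono fun z => hDle (x, z)
              _ = 2 * g x + 2 * ∫⁻ z, g z ∂(P y) := by
                  rw [lintegral_add_left measurable_const, lintegral_const, measure_univ,
                    mul_one, lintegral_const_mul 2 hg]
        _ = 2 * ∫⁻ x, g x ∂(P y) + 2 * ∫⁻ z, g z ∂(P y) := by
            rw [lintegral_add_right _ measurable_const, lintegral_const, measure_univ,
              mul_one, lintegral_const_mul 2 hg]
        _ = 4 * ∫⁻ z, g z ∂(P y) := by ring
    refine lt_of_le_of_lt h1 ?_
    rw [lintegral_const_mul 4 hPg, hinvP]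
    exact ENNReal.mul_lt_top (by norm_num) hgfin
  -- the pointwise (in `y`) inequality from the holding probability
  have hkey : ∀ᵐ y ∂μ, 2 * ENNReal.ofReal ε * (∫⁻ z, D (y, z) ∂(P y))
      ≤ ∫⁻ x, ∫⁻ z, D (x, z) ∂(P y) ∂(P y) := by
    filter_upwards [hhold] with y hy
    set ν := P y with hνdef
    set S := ∫⁻ z, D (y, z) ∂ν with hSdef
    have hDy : Measurable fun x => D (x, y) :=
      hD.comp (measurable_id.prodMk measurable_const)
    have hI : ∀ x, ENNReal.ofReal ε * D (x, y) ≤ ∫⁻ z, D (x, z) ∂ν := by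
      intro x
      calc ENNReal.ofReal ε * D (x, y) ≤ ν {y} * D (x, y) := mul_le_mul_left hy _
        _ = D (x, y) * ν {y} := mul_comm _ _
        _ = ∫⁻ z in {y}, D (x, z) ∂ν := (lintegral_singleton (fun z => D (x, z)) y).symm
        _ ≤ ∫⁻ z, D (x, z) ∂ν := setLIntegral_le_lintegral _ _
    have hfullsym : ∫⁻ x, D (x, y) ∂ν = S := by
      rw [hSdef]
      refine lintegral_congr fun x => ?_
      simp only [hDdef]
      congr 1
      ring
    have hcompl : ∫⁻ x in {y}ᶜ, D (x, y) ∂ν = S := by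
      have h0 : ∫⁻ x in {y}, D (x, y) ∂ν = 0 := by
        rw [lintegral_singleton]
        simp [hDdef]
      rw [← hfullsym]
      have hadd := lintegral_add_compl (fun x => D (x, y)) (measurableSet_singleton y) (μ := ν)
      rw [h0, zero_add] at hadd
      exact hadd
    have hT : ∫⁻ x, ∫⁻ z, D (x, z) ∂ν ∂ν
        = ∫⁻ x in {y}, (∫⁻ z, D (x, z) ∂ν) ∂ν + ∫⁻ x in {y}ᶜ, (∫⁻ z, D (x, z) ∂ν) ∂ν :=
      (lintegral_add_compl _ (measurableSet_singleton y)).symm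
    have ht1 : S * ENNReal.ofReal ε ≤ ∫⁻ x in {y}, (∫⁻ z, D (x, z) ∂ν) ∂ν := by
      rw [lintegral_singleton]
      exact mul_le_mul_right hy S
    have ht2 : ENNReal.ofReal ε * S ≤ ∫⁻ x in {y}ᶜ, (∫⁻ z, D (x, z) ∂ν) ∂ν := by
      calc ENNReal.ofReal ε * S = ENNReal.ofReal ε * ∫⁻ x in {y}ᶜ, D (x, y) ∂ν := by
            rw [hcompl]
        _ = ∫⁻ x in {y}ᶜ, ENNReal.ofReal ε * D (x, y) ∂ν := (lintegral_const_mul _ hDy).symm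
        _ ≤ ∫⁻ x in {y}ᶜ, (∫⁻ z, D (x, z) ∂ν) ∂ν := lintegral_mono fun x => hI x
    calc 2 * ENNReal.ofReal ε * S = S * ENNReal.ofReal ε + ENNReal.ofReal ε * S := by ring
      _ ≤ ∫⁻ x in {y}, (∫⁻ z, D (x, z) ∂ν) ∂ν + ∫⁻ x in {y}ᶜ, (∫⁻ z, D (x, z) ∂ν) ∂ν :=
          add_le_add ht1 ht2
      _ = ∫⁻ x, ∫⁻ z, D (x, z) ∂ν ∂ν := hT.symm
  -- integrate the pointwise inequality
  have hmain : 2 * ENNReal.ofReal ε * LP ≤ ∫⁻ x, ∫⁻ w, D (x, w) ∂((P ∘ₖ Pstar) x) ∂μ := by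
    rw [hLCeq]
    calc 2 * ENNReal.ofReal ε * LP
        = ∫⁻ y, 2 * ENNReal.ofReal ε * (∫⁻ z, D (y, z) ∂(P y)) ∂μ :=
          (lintegral_const_mul _ hSmeas).symm
      _ ≤ ∫⁻ y, ∫⁻ x, ∫⁻ z, D (x, z) ∂(P y) ∂(P y) ∂μ := lintegral_mono_ae hkey
  -- convert to real numbers
  have hLPfin' : ∫⁻ x, ∫⁻ y, ENNReal.ofReal ((f x - f y) ^ 2) ∂(P x) ∂μ ≠ ⊤ := hLPfin.ne
  have hLCfin' : ∫⁻ x, ∫⁻ y, ENNReal.ofReal ((f x - f y) ^ 2) ∂((P ∘ₖ Pstar) x) ∂μ ≠ ⊤ :=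
    hLCfin.ne
  rw [dirichletForm_eq_toReal μ P f hf hLPfin',
    dirichletForm_eq_toReal μ (P ∘ₖ Pstar) f hf hLCfin']
  have h1 : (2 * ENNReal.ofReal ε * LP).toReal
      ≤ (∫⁻ x, ∫⁻ w, D (x, w) ∂((P ∘ₖ Pstar) x) ∂μ).toReal :=
    ENNReal.toReal_mono hLCfin.ne hmain
  rw [ENNReal.toReal_mul, ENNReal.toReal_mul, ENNReal.toReal_ofReal hε] at h1
  simp only [ENNReal.toReal_ofNat] at h1
  linarith
end

section
/- Suppose X is a Markov chain with kernel P having a unique invariant probability measure μ, and V, f, 𝔰 are nonnegative finite measurable functions with PV ≤ V − f + 𝔰 pointwise. Then μ(f) ≤ μ(𝔰) (whether or not μ(f) = ∞). -/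
open MeasureTheory ProbabilityTheory ENNReal

/-- Let `P` be a Markov kernel with unique invariant probability measure `μ`, and
`V, f, 𝔰` nonnegative finite measurable functions with `PV ≤ V − f + 𝔰` pointwise
(equivalently `PV + f ≤ V + 𝔰` since all quantities are finite and nonnegative).
Then `μ(f) ≤ μ(𝔰)`, whether or not `μ(f) = ∞`. -/
theorem integral_drift_bound
    {E : Type*} [MeasurableSpace E]
    (P : Kernel E E) [IsMarkovKernel P]
    (μ : Measure E) [IsProbabilityMeasure μ]
    (hinv : μ.bind P = μ)
    (huniq : ∀ ν : Measure E, IsProbabilityMeasure ν → ν.bind P = ν → ν = μ)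
    (V f s : E → ℝ≥0∞)
    (hV : Measurable V) (hf : Measurable f) (hs : Measurable s)
    (hVfin : ∀ x, V x ≠ ∞) (hffin : ∀ x, f x ≠ ∞) (hsfin : ∀ x, s x ≠ ∞)
    (hdrift : ∀ x, (∫⁻ y, V y ∂(P x)) + f x ≤ V x + s x) :
    ∫⁻ x, f x ∂μ ≤ ∫⁻ x, s x ∂μ := by
  -- truncated `f`
  set g : ℕ → E → ℝ≥0∞ := fun n x => if V x ≤ (n : ℝ≥0∞) then f x else 0 with hg
  have hgmeas : ∀ n : ℕ, Measurable (g n) := fun n =>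
    Measurable.ite (hV measurableSet_Iic) hf measurable_const
  -- pointwise truncated drift inequality
  have key : ∀ (n : ℕ) (x : E),
      (∫⁻ y, min (V y) n ∂(P x)) + g n x ≤ min (V x) n + s x := by
    intro n x
    by_cases hx : V x ≤ (n : ℝ≥0∞)
    · rw [hg]
      simp only [if_pos hx]
      rw [min_eq_left hx]
      calc (∫⁻ y, min (V y) n ∂(P x)) + f x
          ≤ (∫⁻ y, V y ∂(P x)) + f x := by
            gcongr with y
            exact min_le_left _ _
        _ ≤ V x + s x := hdrift x
    · rw [hg]
      simp only [if_neg hx]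
      rw [add_zero, min_eq_right (le_of_not_ge hx)]
      calc (∫⁻ y, min (V y) n ∂(P x))
          ≤ ∫⁻ _, (n : ℝ≥0∞) ∂(P x) := by
            gcongr with y
            exact min_le_right _ _
        _ = n := by simp
        _ ≤ n + s x := le_self_add
  -- integrate against μ and cancel the truncated potential
  have step : ∀ n : ℕ, ∫⁻ x, g n x ∂μ ≤ ∫⁻ x, s x ∂μ := by
    intro n
    have hVn : Measurable fun x => min (V x) (n : ℝ≥0∞) := hV.min measurable_const
    have hinvV : ∫⁻ x, ∫⁻ y, min (V y) n ∂(P x) ∂μ = ∫⁻ x, min (V x) n ∂μ := by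
      rw [← Measure.lintegral_bind P.measurable.aemeasurable hVn.aemeasurable, hinv]
    have hint : (∫⁻ x, min (V x) n ∂μ) + ∫⁻ x, g n x ∂μ
        ≤ (∫⁻ x, min (V x) n ∂μ) + ∫⁻ x, s x ∂μ := by
      calc (∫⁻ x, min (V x) n ∂μ) + ∫⁻ x, g n x ∂μ
          = ∫⁻ x, (∫⁻ y, min (V y) n ∂(P x)) + g n x ∂μ := by
            rw [← hinvV, ← lintegral_add_right _ (hgmeas n)]
        _ ≤ ∫⁻ x, min (V x) n + s x ∂μ := lintegral_mono fun x => key n x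
        _ = (∫⁻ x, min (V x) n ∂μ) + ∫⁻ x, s x ∂μ := lintegral_add_left hVn _
    have hfin : (∫⁻ x, min (V x) n ∂μ) ≠ ∞ := by
      refine ne_of_lt (lt_of_le_of_lt (lintegral_mono fun x => min_le_right _ _) ?_)
      simp
    exact (ENNReal.add_le_add_iff_left hfin).mp hint
  -- monotone convergence
  have hmono : ∀ ⦃m n : ℕ⦄, m ≤ n → ∀ x, g m x ≤ g n x := by
    intro m n hmn x
    rw [hg]
    dsimp only
    by_cases hx : V x ≤ (m : ℝ≥0∞)
    · rw [if_pos hx, if_pos (hx.trans (by exact_mod_cast Nat.cast_le.mpr hmn))]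
    · rw [if_neg hx]
      exact zero_le
  have hsup : ∀ x, ⨆ n, g n x = f x := by
    intro x
    obtain ⟨n, hn⟩ : ∃ n : ℕ, V x ≤ (n : ℝ≥0∞) := by
      obtain ⟨n, hn⟩ := ENNReal.exists_nat_gt (hVfin x)
      exact ⟨n, hn.le⟩
    refine le_antisymm (iSup_le fun m => ?_) ?_
    · by_cases hx : V x ≤ (m : ℝ≥0∞)
      · rw [hg]; dsimp only; rw [if_pos hx]
      · rw [hg]; dsimp only; rw [if_neg hx]; exact zero_le
    · have : g n x = f x := by rw [hg]; dsimp only; rw [if_pos hn]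
      rw [← this]
      exact le_iSup (fun n => g n x) n
  calc ∫⁻ x, f x ∂μ = ∫⁻ x, ⨆ n, g n x ∂μ := lintegral_congr fun x => (hsup x).symm
    _ = ⨆ n, ∫⁻ x, g n x ∂μ := lintegral_iSup hgmeas fun m n h x => hmono h x
    _ ≤ ∫⁻ x, s x ∂μ := iSup_le step
end

section
/- Let P satisfy P(x,A) ≥ ε ν(A) 1_C(x) for a probability measure ν, ε > 0, and be μ-invariant. Then with m = μ(f·1_C)/μ(C), we have ‖(f−m)1_C‖²_{L²(μ)} ≤ (2/ε) 𝓔(P,f) for all f ∈ L²(μ). -/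
open MeasureTheory ProbabilityTheory
open scoped ENNReal

/-- Minorization `P(x,A) ≥ ε ν(A) 1_C(x)` for a `μ`-invariant Markov kernel `P`
implies a local Poincaré inequality: with `m = μ(f·1_C)/μ(C)`,
`‖(f−m)·1_C‖²_{L²(μ)} ≤ (2/ε)·𝓔(P,f)` for all `f ∈ L²(μ)`. -/
theorem local_poincare_from_minorization
    {E : Type*} [MeasurableSpace E] (μ : Measure E) [IsProbabilityMeasure μ]
    (P : Kernel E E) [IsMarkovKernel P] (hinv : μ.bind P = μ)
    (C : Set E) (hC : MeasurableSet C) (hCpos : 0 < μ C)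
    (ν : Measure E) [IsProbabilityMeasure ν] (ε : ℝ) (hε : 0 < ε)
    (hminor : ∀ x ∈ C, ∀ A : Set E, MeasurableSet A → ENNReal.ofReal ε * ν A ≤ P x A)
    (f : E → ℝ) (hf : Measurable f) (hf2 : MemLp f 2 μ) :
    ∫ x in C, (f x - (∫ y in C, f y ∂μ) / (μ C).toReal) ^ 2 ∂μ ≤
      (2 / ε) * dirichletForm μ P f := by
  classical
  have hμC_ne_top : μ C ≠ ∞ := (measure_lt_top μ C).ne
  have hμCr : 0 < (μ C).toReal := ENNReal.toReal_pos hCpos.ne' hμC_ne_top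
  set m : ℝ := (∫ y in C, f y ∂μ) / (μ C).toReal with hm_def
  have hfInt : Integrable f μ := hf2.integrable one_le_two
  have hfsqInt : Integrable (fun x => f x ^ 2) μ := hf2.integrable_sq
  -- the constant for domination of ν by μ
  set k : ℝ≥0∞ := ENNReal.ofReal ε * μ C with hk_def
  have hε0 : ENNReal.ofReal ε ≠ 0 := (ENNReal.ofReal_pos.2 hε).ne'
  have hk0 : k ≠ 0 := by
    simp [hk_def, hε0, hCpos.ne']
  have hk_top : k ≠ ∞ := by
    simp [hk_def, ENNReal.mul_ne_top ENNReal.ofReal_ne_top hμC_ne_top]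
  -- ν ≤ k⁻¹ • μ
  have hνμ : ∀ A : Set E, MeasurableSet A → k * ν A ≤ μ A := by
    intro A hA
    have hbind : μ A = ∫⁻ x, P x A ∂μ := by
      conv_lhs => rw [← hinv]
      exact Measure.bind_apply hA (P.measurable.aemeasurable)
    calc k * ν A = ∫⁻ _ in C, ENNReal.ofReal ε * ν A ∂μ := by
          rw [setLIntegral_const]; ring
      _ ≤ ∫⁻ x in C, P x A ∂μ :=
          setLIntegral_mono' hC fun x hx => hminor x hx A hA
      _ ≤ ∫⁻ x, P x A ∂μ := setLIntegral_le_lintegral _ _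
      _ = μ A := hbind.symm
  have hν_le : ν ≤ k⁻¹ • μ := by
    refine Measure.le_iff.2 fun A hA => ?_
    rw [Measure.smul_apply, smul_eq_mul]
    calc ν A = k⁻¹ * (k * ν A) := by
          rw [← mul_assoc, ENNReal.inv_mul_cancel hk0 hk_top, one_mul]
      _ ≤ k⁻¹ * μ A := mul_le_mul_right (hνμ A hA) _
  have hfν : MemLp f 2 ν :=
    MemLp.mono_measure hν_le (hf2.smul_measure (by simpa using hk0))
  have hfνInt : Integrable f ν := hfν.integrable one_le_two
  set c : ℝ := ∫ y, f y ∂ν with hc_def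
  -- step: pointwise Jensen w.r.t. ν
  have hL3 : ∀ x, (f x - c) ^ 2 ≤ ∫ y, (f x - f y) ^ 2 ∂ν := by
    intro x
    have hg : MemLp (fun y => f x - f y) 2 ν := (memLp_const (f x)).sub hfν
    have hvar := variance_nonneg (fun y => f x - f y) ν
    rw [variance_eq_sub hg] at hvar
    have hmean : ∫ y, (f x - f y) ∂ν = f x - c := by
      rw [integral_sub (integrable_const _) hfνInt, integral_const]
      simp [hc_def]
    have hsq : (fun y => f x - f y) ^ 2 = fun y => (f x - f y) ^ 2 := by
      funext y; simp [pow_two]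
    rw [hsq, hmean] at hvar
    linarith
  -- variance minimization over C : ∫_C (f-m)² ≤ ∫_C (f-c)²
  have hIntm : Integrable (fun x => (f x - m) ^ 2) (μ.restrict C) := by
    have : MemLp (fun x => f x - m) 2 (μ.restrict C) :=
      ((hf2.sub (memLp_const m)).restrict C)
    exact this.integrable_sq
  have hIntc : Integrable (fun x => (f x - c) ^ 2) (μ.restrict C) := by
    have : MemLp (fun x => f x - c) 2 (μ.restrict C) :=
      ((hf2.sub (memLp_const c)).restrict C)
    exact this.integrable_sq
  have hfIntC : Integrable f (μ.restrict C) := hfInt.restrict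
  have hmμC : m * (μ C).toReal = ∫ y in C, f y ∂μ := by
    rw [hm_def]; field_simp
  have hL4 : ∫ x in C, (f x - m) ^ 2 ∂μ ≤ ∫ x in C, (f x - c) ^ 2 ∂μ := by
    have hexp : ∀ x, (f x - c) ^ 2
        = (f x - m) ^ 2 + ((m - c) * (2 * f x - m - c)) := by intro x; ring
    have hInt2 : Integrable (fun x => (m - c) * (2 * f x - m - c)) (μ.restrict C) := by
      have h0 : Integrable (fun x => (m - c) * (2 * f x - (m + c))) (μ.restrict C) :=
        ((hfIntC.const_mul 2).sub (integrable_const (m + c))).const_mul (m - c)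
      exact h0.congr (ae_of_all _ fun x => by ring)
    have : ∫ x in C, (f x - c) ^ 2 ∂μ
        = ∫ x in C, (f x - m) ^ 2 ∂μ + ∫ x in C, (m - c) * (2 * f x - m - c) ∂μ := by
      rw [← integral_add hIntm hInt2]
      exact integral_congr_ae (ae_of_all _ fun x => hexp x)
    rw [this]
    have hlin : ∫ x in C, (m - c) * (2 * f x - m - c) ∂μ
        = (m - c) * (2 * (∫ y in C, f y ∂μ) - (m + c) * (μ C).toReal) := by
      rw [integral_const_mul]
      congr 1
      rw [show (fun x => 2 * f x - m - c) = fun x => 2 * f x - (m + c) by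
        funext x; ring]
      rw [integral_sub (hfIntC.const_mul 2) (integrable_const _),
        integral_const_mul, integral_const]
      simp [Measure.restrict_apply_univ, smul_eq_mul, measureReal_def]
      ring
    rw [hlin, ← hmμC]
    nlinarith [sq_nonneg (m - c), hμCr]
  -- lintegral versions and main chain
  set F : E → E → ℝ≥0∞ := fun x y => ENNReal.ofReal ((f x - f y) ^ 2) with hF_def
  have hF_meas : Measurable (Function.uncurry F) := by
    apply Measurable.ennreal_ofReal
    exact ((hf.comp measurable_fst).sub (hf.comp measurable_snd)).pow_const 2
  set I : E → ℝ≥0∞ := fun x => ∫⁻ y, F x y ∂(P x) with hI_def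
  have hI_meas : Measurable I := hF_meas.lintegral_kernel_prod_right
  set D : ℝ≥0∞ := ∫⁻ x, I x ∂μ with hD_def
  -- D is finite
  have hfsq_fin : ∫⁻ x, ENNReal.ofReal (2 * f x ^ 2) ∂μ < ∞ := by
    have : Integrable (fun x => 2 * f x ^ 2) μ := hfsqInt.const_mul 2
    exact this.lintegral_lt_top
  have hD_lt : D < ∞ := by
    have hpt : ∀ x y, F x y ≤ ENNReal.ofReal (2 * f x ^ 2) + ENNReal.ofReal (2 * f y ^ 2) := by
      intro x y
      rw [← ENNReal.ofReal_add (by positivity) (by positivity)]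
      exact ENNReal.ofReal_le_ofReal (by nlinarith [sq_nonneg (f x + f y)])
    have hstep : ∀ x, I x ≤ ENNReal.ofReal (2 * f x ^ 2)
        + ∫⁻ y, ENNReal.ofReal (2 * f y ^ 2) ∂(P x) := by
      intro x
      calc I x ≤ ∫⁻ y, (ENNReal.ofReal (2 * f x ^ 2) + ENNReal.ofReal (2 * f y ^ 2)) ∂(P x) :=
            lintegral_mono fun y => hpt x y
        _ = ENNReal.ofReal (2 * f x ^ 2) + ∫⁻ y, ENNReal.ofReal (2 * f y ^ 2) ∂(P x) := by
            rw [lintegral_add_left measurable_const, lintegral_const, measure_univ, mul_one]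
    have h2meas : Measurable fun y => ENNReal.ofReal (2 * f y ^ 2) :=
      ((hf.pow_const 2).const_mul 2).ennreal_ofReal
    have hbind2 : ∫⁻ x, (∫⁻ y, ENNReal.ofReal (2 * f y ^ 2) ∂(P x)) ∂μ
        = ∫⁻ y, ENNReal.ofReal (2 * f y ^ 2) ∂μ := by
      rw [← Measure.lintegral_bind P.measurable.aemeasurable h2meas.aemeasurable, hinv]
    calc D ≤ ∫⁻ x, (ENNReal.ofReal (2 * f x ^ 2)
          + ∫⁻ y, ENNReal.ofReal (2 * f y ^ 2) ∂(P x)) ∂μ := lintegral_mono hstep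
      _ = (∫⁻ x, ENNReal.ofReal (2 * f x ^ 2) ∂μ)
          + ∫⁻ x, (∫⁻ y, ENNReal.ofReal (2 * f y ^ 2) ∂(P x)) ∂μ := by
          rw [lintegral_add_left h2meas]
      _ < ∞ := by
          rw [hbind2]
          exact ENNReal.add_lt_top.2 ⟨hfsq_fin, hfsq_fin⟩
  have hD_ne : D ≠ ∞ := hD_lt.ne
  -- the main lintegral chain
  have hεinv_ne_top : (ENNReal.ofReal ε)⁻¹ ≠ ∞ := by
    simp [ENNReal.inv_ne_top, hε0]
  have hchain : ∫⁻ x in C, ENNReal.ofReal ((f x - m) ^ 2) ∂μ ≤ (ENNReal.ofReal ε)⁻¹ * D := by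
    calc ∫⁻ x in C, ENNReal.ofReal ((f x - m) ^ 2) ∂μ
        = ENNReal.ofReal (∫ x in C, (f x - m) ^ 2 ∂μ) :=
          (ofReal_integral_eq_lintegral_ofReal hIntm
            (ae_of_all _ fun x => sq_nonneg _)).symm
      _ ≤ ENNReal.ofReal (∫ x in C, (f x - c) ^ 2 ∂μ) := ENNReal.ofReal_le_ofReal hL4
      _ = ∫⁻ x in C, ENNReal.ofReal ((f x - c) ^ 2) ∂μ :=
          ofReal_integral_eq_lintegral_ofReal hIntc (ae_of_all _ fun x => sq_nonneg _)
      _ ≤ ∫⁻ x in C, (∫⁻ y, F x y ∂ν) ∂μ := by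
          refine setLIntegral_mono' hC fun x _ => ?_
          have hgInt : Integrable (fun y => (f x - f y) ^ 2) ν := by
            have hg : MemLp (fun y => f x - f y) 2 ν := (memLp_const (f x)).sub hfν
            exact hg.integrable_sq
          calc ENNReal.ofReal ((f x - c) ^ 2)
              ≤ ENNReal.ofReal (∫ y, (f x - f y) ^ 2 ∂ν) :=
                ENNReal.ofReal_le_ofReal (hL3 x)
            _ = ∫⁻ y, F x y ∂ν :=
                ofReal_integral_eq_lintegral_ofReal hgInt
                  (ae_of_all _ fun y => sq_nonneg _)
      _ ≤ ∫⁻ x in C, (ENNReal.ofReal ε)⁻¹ * I x ∂μ := by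
          refine setLIntegral_mono' hC fun x hx => ?_
          have hPx : (ENNReal.ofReal ε) • ν ≤ P x := by
            refine Measure.le_iff.2 fun A hA => ?_
            simpa [smul_eq_mul] using hminor x hx A hA
          have h1 : ENNReal.ofReal ε * ∫⁻ y, F x y ∂ν ≤ I x := by
            calc ENNReal.ofReal ε * ∫⁻ y, F x y ∂ν
                = ∫⁻ y, F x y ∂((ENNReal.ofReal ε) • ν) := by
                  rw [lintegral_smul_measure, smul_eq_mul]
              _ ≤ I x := lintegral_mono' hPx le_rfl
          calc (∫⁻ y, F x y ∂ν)
              = (ENNReal.ofReal ε)⁻¹ * (ENNReal.ofReal ε * ∫⁻ y, F x y ∂ν) := by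
                rw [← mul_assoc, ENNReal.inv_mul_cancel
                  hε0 ENNReal.ofReal_ne_top, one_mul]
            _ ≤ (ENNReal.ofReal ε)⁻¹ * I x := mul_le_mul_right h1 _
      _ = (ENNReal.ofReal ε)⁻¹ * ∫⁻ x in C, I x ∂μ :=
          lintegral_const_mul' _ _ hεinv_ne_top
      _ ≤ (ENNReal.ofReal ε)⁻¹ * D :=
          mul_le_mul_right (setLIntegral_le_lintegral _ _) _
  -- convert endpoints to real
  have hLHS : ∫ x in C, (f x - m) ^ 2 ∂μ
      = (∫⁻ x in C, ENNReal.ofReal ((f x - m) ^ 2) ∂μ).toReal := by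
    rw [← ofReal_integral_eq_lintegral_ofReal hIntm (ae_of_all _ fun x => sq_nonneg _),
      ENNReal.toReal_ofReal (integral_nonneg fun x => sq_nonneg _)]
  have hG : ∀ x, ∫ y, (f x - f y) ^ 2 ∂(P x) = (I x).toReal := by
    intro x
    rw [hI_def]
    exact integral_eq_lintegral_of_nonneg_ae (ae_of_all _ fun y => sq_nonneg _)
      (((hf.const_sub (f x)).pow_const 2).aestronglyMeasurable.congr
        (ae_of_all _ fun y => by ring))
  have hdir : dirichletForm μ P f = (1 / 2) * D.toReal := by
    rw [dirichletForm]
    congr 1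
    calc ∫ x, ∫ y, (f x - f y) ^ 2 ∂(P x) ∂μ = ∫ x, (I x).toReal ∂μ :=
          integral_congr_ae (ae_of_all _ hG)
      _ = D.toReal := integral_toReal hI_meas.aemeasurable (ae_lt_top hI_meas hD_ne)
  rw [hLHS, hdir]
  have hfinal : ((ENNReal.ofReal ε)⁻¹ * D).toReal = ε⁻¹ * D.toReal := by
    rw [ENNReal.toReal_mul, ENNReal.toReal_inv, ENNReal.toReal_ofReal hε.le]
  calc (∫⁻ x in C, ENNReal.ofReal ((f x - m) ^ 2) ∂μ).toReal
      ≤ ((ENNReal.ofReal ε)⁻¹ * D).toReal :=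
        ENNReal.toReal_mono (ENNReal.mul_ne_top hεinv_ne_top hD_ne) hchain
    _ = ε⁻¹ * D.toReal := hfinal
    _ = 2 / ε * ((1 / 2) * D.toReal) := by ring
end

section
/- Let ν be a symmetric probability measure on E×E and h : E → [0,∞) with h ∈ L¹ of the first marginal of ν. With A_t := {x : h(x) ≤ t}, we have E_ν[|h(X)−h(Y)|] = 2∫₀^∞ ν(A_t × A_tᶜ) dt. -/
open MeasureTheory Set
open scoped ENNReal

/-- Lawler–Sokal layer-cake identity: let `ν` be a symmetric probability measure on
`E×E` and `h : E → [0,∞)` with `p ↦ h(p₁)` integrable with respect to `ν`. With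
`A_t = {x : h(x) ≤ t}`, we have `E_ν[|h(X)−h(Y)|] = 2∫₀^∞ ν(A_t × A_tᶜ) dt`. -/
theorem lawler_sokal_layer_cake
    {E : Type*} [MeasurableSpace E] (ν : Measure (E × E)) [IsProbabilityMeasure ν]
    (hsym : ν.map Prod.swap = ν)
    (h : E → ℝ) (hmeas : Measurable h) (hpos : ∀ x, 0 ≤ h x)
    (hint : Integrable (fun p : E × E => h p.1) ν) :
    ∫ p : E × E, |h p.1 - h p.2| ∂ν =
      2 * ∫ t in Set.Ioi (0 : ℝ), (ν ({x | h x ≤ t} ×ˢ {x | h x ≤ t}ᶜ)).toReal := by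
  have hm1 : Measurable fun p : E × E => h p.1 := hmeas.comp measurable_fst
  have hm2 : Measurable fun p : E × E => h p.2 := hmeas.comp measurable_snd
  have h2int : Integrable (fun p : E × E => h p.2) ν := by
    have := (integrable_map_measure (f := Prod.swap)
      (g := fun p : E × E => h p.1) hm1.aestronglyMeasurable measurable_swap.aemeasurable).mp
      (by rw [hsym]; exact hint)
    exact this
  have habs : Integrable (fun p : E × E => |h p.1 - h p.2|) ν := (hint.sub h2int).abs
  -- the key pointwise layer-cake identity
  have key : ∀ a b : ℝ, 0 ≤ a →
      (∫⁻ t in Ioi (0:ℝ), (Ico a b).indicator (fun _ => (1:ℝ≥0∞)) t) = ENNReal.ofReal (b - a) := by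
    intro a b ha
    rw [lintegral_indicator measurableSet_Ico, setLIntegral_one, Measure.restrict_apply measurableSet_Ico]
    rcases le_or_gt b a with hba | hab
    · rw [Set.Ico_eq_empty (not_lt.2 hba)]
      have : ENNReal.ofReal (b - a) = 0 := ENNReal.ofReal_eq_zero.2 (by linarith)
      simp [this]
    · refine le_antisymm ?_ ?_
      · calc volume (Ico a b ∩ Ioi 0) ≤ volume (Ico a b) := measure_mono inter_subset_left
          _ = ENNReal.ofReal (b - a) := Real.volume_Ico
      · calc ENNReal.ofReal (b - a) = volume (Ioo a b) := Real.volume_Ioo.symm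
          _ ≤ volume (Ico a b ∩ Ioi 0) :=
            measure_mono fun t ht => ⟨⟨ht.1.le, ht.2⟩, lt_of_le_of_lt ha ht.1⟩
  have split : ∀ x y : ℝ, ENNReal.ofReal |x - y| =
      ENNReal.ofReal (x - y) + ENNReal.ofReal (y - x) := by
    intro x y
    rcases le_total x y with hxy | hxy
    · have h1 : ENNReal.ofReal (x - y) = 0 := ENNReal.ofReal_eq_zero.2 (by linarith)
      rw [h1, zero_add, abs_sub_comm, abs_of_nonneg (by linarith)]
    · have h1 : ENNReal.ofReal (y - x) = 0 := ENNReal.ofReal_eq_zero.2 (by linarith)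
      rw [h1, add_zero, abs_of_nonneg (by linarith)]
  -- symmetry step
  have hswap : ∫⁻ p : E × E, ENNReal.ofReal (h p.1 - h p.2) ∂ν
      = ∫⁻ p : E × E, ENNReal.ofReal (h p.2 - h p.1) ∂ν := by
    conv_lhs => rw [← hsym]
    rw [lintegral_map (f := fun p : E × E => ENNReal.ofReal (h p.1 - h p.2)) (hm1.sub hm2).ennreal_ofReal measurable_swap]
    rfl
  -- the main lintegral identity
  have core : ∫⁻ p : E × E, ENNReal.ofReal |h p.1 - h p.2| ∂ν
      = 2 * ∫⁻ t in Ioi (0:ℝ), ν ({x | h x ≤ t} ×ˢ {x | h x ≤ t}ᶜ) := by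
    have step1 : ∫⁻ p : E × E, ENNReal.ofReal |h p.1 - h p.2| ∂ν
        = 2 * ∫⁻ p : E × E, ENNReal.ofReal (h p.2 - h p.1) ∂ν := by
      calc ∫⁻ p : E × E, ENNReal.ofReal |h p.1 - h p.2| ∂ν
          = ∫⁻ p : E × E, (ENNReal.ofReal (h p.1 - h p.2) + ENNReal.ofReal (h p.2 - h p.1)) ∂ν := by
            simp_rw [split]
        _ = (∫⁻ p : E × E, ENNReal.ofReal (h p.1 - h p.2) ∂ν)
            + ∫⁻ p : E × E, ENNReal.ofReal (h p.2 - h p.1) ∂ν :=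
            lintegral_add_left (hm1.sub hm2).ennreal_ofReal _
        _ = 2 * ∫⁻ p : E × E, ENNReal.ofReal (h p.2 - h p.1) ∂ν := by
            rw [hswap, two_mul]
    rw [step1]
    congr 1
    -- rewrite pointwise as an inner integral over t
    have step2 : ∀ p : E × E, ENNReal.ofReal (h p.2 - h p.1)
        = ∫⁻ t in Ioi (0:ℝ), (Ico (h p.1) (h p.2)).indicator (fun _ => (1:ℝ≥0∞)) t := by
      intro p; exact (key _ _ (hpos p.1)).symm
    simp_rw [step2]
    -- Tonelli
    have hum : Measurable (Function.uncurry fun (p : E × E) (t : ℝ) =>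
        (Ico (h p.1) (h p.2)).indicator (fun _ => (1:ℝ≥0∞)) t) := by
      have hS : MeasurableSet {q : (E × E) × ℝ | h q.1.1 ≤ q.2 ∧ q.2 < h q.1.2} := by
        exact ((measurableSet_le (hm1.comp measurable_fst) measurable_snd).inter
          (measurableSet_lt measurable_snd (hm2.comp measurable_fst)))
      have : (Function.uncurry fun (p : E × E) (t : ℝ) =>
          (Ico (h p.1) (h p.2)).indicator (fun _ => (1:ℝ≥0∞)) t)
          = ({q : (E × E) × ℝ | h q.1.1 ≤ q.2 ∧ q.2 < h q.1.2}).indicator (fun _ => 1) := by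
        funext q
        simp [Function.uncurry, Set.indicator_apply, Set.mem_Ico]
      rw [this]
      exact measurable_const.indicator hS
    rw [lintegral_lintegral_swap hum.aemeasurable]
    refine setLIntegral_congr_fun measurableSet_Ioi (fun t _ => ?_)
    have : (fun p : E × E => (Ico (h p.1) (h p.2)).indicator (fun _ => (1:ℝ≥0∞)) t)
        = ({x | h x ≤ t} ×ˢ {x | h x ≤ t}ᶜ).indicator (fun _ => 1) := by
      funext p
      simp [Set.indicator_apply, Set.mem_Ico, Set.mem_prod, not_le]
    rw [this]
    exact lintegral_indicator_one ((hmeas measurableSet_Iic).prod (hmeas measurableSet_Iic).compl)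
  -- convert to real integrals
  have hLHS : ∫ p : E × E, |h p.1 - h p.2| ∂ν
      = (∫⁻ p : E × E, ENNReal.ofReal |h p.1 - h p.2| ∂ν).toReal := by
    rw [integral_eq_lintegral_of_nonneg_ae (Filter.Eventually.of_forall fun p => abs_nonneg _)
      habs.aestronglyMeasurable]
  have hmeasν : Measurable fun t : ℝ => ν ({x | h x ≤ t} ×ˢ {x | h x ≤ t}ᶜ) := by
    have hS : MeasurableSet {q : ℝ × (E × E) | h q.2.1 ≤ q.1 ∧ q.1 < h q.2.2} :=
      (measurableSet_le (hm1.comp measurable_snd) measurable_fst).inter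
        (measurableSet_lt measurable_fst (hm2.comp measurable_snd))
    have : (fun t : ℝ => ν ({x | h x ≤ t} ×ˢ {x | h x ≤ t}ᶜ))
        = fun t : ℝ => ∫⁻ p : E × E,
            ({q : ℝ × (E × E) | h q.2.1 ≤ q.1 ∧ q.1 < h q.2.2}).indicator (fun _ => 1) (t, p) ∂ν := by
      funext t
      have hset : {x | h x ≤ t} ×ˢ {x | h x ≤ t}ᶜ = {p : E × E | h p.1 ≤ t ∧ t < h p.2} := by
        ext p; simp [Set.mem_prod, not_le]
      rw [hset]
      rw [show (fun p : E × E =>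
          ({q : ℝ × (E × E) | h q.2.1 ≤ q.1 ∧ q.1 < h q.2.2}).indicator (fun _ => (1:ℝ≥0∞)) (t, p))
          = ({p : E × E | h p.1 ≤ t ∧ t < h p.2}).indicator (fun _ => 1) from by
        funext p; simp [Set.indicator_apply]]
      exact (lintegral_indicator_one
        ((measurableSet_le hm1 measurable_const).inter (measurableSet_lt measurable_const hm2))).symm
    rw [this]
    exact Measurable.lintegral_prod_right (measurable_const.indicator hS)
  have hfin : ∀ t : ℝ, ν ({x | h x ≤ t} ×ˢ {x | h x ≤ t}ᶜ) < ⊤ := fun t => measure_lt_top _ _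
  have hRHS : ∫ t in Ioi (0:ℝ), (ν ({x | h x ≤ t} ×ˢ {x | h x ≤ t}ᶜ)).toReal
      = (∫⁻ t in Ioi (0:ℝ), ν ({x | h x ≤ t} ×ˢ {x | h x ≤ t}ᶜ)).toReal :=
    integral_toReal hmeasν.aemeasurable (Filter.Eventually.of_forall fun t => hfin t)
  have hlt : ∫⁻ p : E × E, ENNReal.ofReal |h p.1 - h p.2| ∂ν ≠ ⊤ := by
    rw [← ofReal_integral_eq_lintegral_ofReal habs
      (Filter.Eventually.of_forall fun p => abs_nonneg _)]
    exact ENNReal.ofReal_ne_top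
  have hRfin : ∫⁻ t in Ioi (0:ℝ), ν ({x | h x ≤ t} ×ˢ {x | h x ≤ t}ᶜ) ≠ ⊤ := by
    intro hT
    rw [core, hT] at hlt
    simp at hlt
  rw [hLHS, hRHS, core, ENNReal.toReal_mul]
  norm_num
end
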